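/- Key inequality behind the signature product criterion: let α, β ∈ R^m with coprime leading monomials of π α and π β, and let T = max(s(lt(π β)·α), s(lt(π α)·β)) (the signature of the S-pair). Then for every term u of π(β) − lt(π β) we have s(u·α) < T, and for every term v of π(α) − lt(π α) we have s(v·β) < T. -/

import Mathlib

open MvPolynomial
open scoped MonomialOrder

namespace GB

variable {σ K : Type*} [Field K]

/-- The leading monomial (exponent vector) of `p` with respect to the monomial order `m`. -/
noncomputable def lm (m : MonomialOrder σ) (p : MvPolynomial σ K) : σ →₀ ℕ :=
  m.toSyn.symm (p.support.sup m.toSyn)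

/-- The leading coefficient of `p` with respect to `m`. -/
noncomputable def lc (m : MonomialOrder σ) (p : MvPolynomial σ K) : K :=
  p.coeff (lm m p)

/-- The leading term of `p` with respect to `m`. -/
noncomputable def lt (m : MonomialOrder σ) (p : MvPolynomial σ K) : MvPolynomial σ K :=
  monomial (lm m p) (lc m p)

/-- The (monic) least common multiple of two monomials, as pointwise sup of exponents. -/
noncomputable def mlcm (a b : σ →₀ ℕ) : σ →₀ ℕ := a ⊔ b

/-- The S-polynomial `S(f,g) = (λ/lt f)·f − (λ/lt g)·g` where `λ = lcm(lm f, lm g)`. -/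
noncomputable def sPoly (m : MonomialOrder σ) (f g : MvPolynomial σ K) : MvPolynomial σ K :=
  monomial (mlcm (lm m f) (lm m g) - lm m f) (lc m f)⁻¹ * f
    - monomial (mlcm (lm m f) (lm m g) - lm m g) (lc m g)⁻¹ * g

variable {n : ℕ}

/-- The map `π : R^n → R`, `α ↦ Σ αᵢ fᵢ`, determined by the input polynomials `F`. -/
noncomputable def piMap (F α : Fin n → MvPolynomial σ K) : MvPolynomial σ K :=
  ∑ i, α i * F i

/-- The `i`-th standard basis vector of `R^n`. -/
noncomputable def eV (i : Fin n) : Fin n → MvPolynomial σ K :=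
  fun k => if k = i then 1 else 0

/-- Scalar multiplication of a module element by the monomial with exponent `a` and
coefficient `c`. -/
noncomputable def mulV (a : σ →₀ ℕ) (c : K) (α : Fin n → MvPolynomial σ K) :
    Fin n → MvPolynomial σ K :=
  fun i => monomial a c * α i

/-- The S-pair `spair(α,β) = (λ/lt(πα))·α − (λ/lt(πβ))·β`, `λ = lcm(lm(πα), lm(πβ))`. -/
noncomputable def spair (m : MonomialOrder σ) (F α β : Fin n → MvPolynomial σ K) :
    Fin n → MvPolynomial σ K :=
  fun i =>
    monomial (mlcm (lm m (piMap F α)) (lm m (piMap F β)) - lm m (piMap F α))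
        (lc m (piMap F α))⁻¹ * α i
      - monomial (mlcm (lm m (piMap F α)) (lm m (piMap F β)) - lm m (piMap F β))
        (lc m (piMap F β))⁻¹ * β i

/-- A module monomial order on the module monomials `a·eᵢ` of `R^n` (encoded as pairs `(a,i)`),
compatible with the monomial order `m`: a well-founded linear order, compatible with monomial
multiplication, such that `a ≼[m] b` iff `a·eᵢ ≤ b·eᵢ` for all `i`. -/
structure ModOrder (σ : Type*) (n : ℕ) (m : MonomialOrder σ) where
  /-- the synonym type carrying the order -/
  syn : Type*
  /-- `syn` is linearly ordered -/
  lin : LinearOrder syn := by infer_instance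
  /-- identification of module monomials with `syn` -/
  toSyn : ((σ →₀ ℕ) × Fin n) ≃ syn
  /-- the order is a well-order -/
  wf : WellFounded fun x y : syn => x < y
  /-- compatibility with monomial multiplication -/
  smul_compat : ∀ (c : σ →₀ ℕ) (S T : (σ →₀ ℕ) × Fin n),
    toSyn S ≤ toSyn T → toSyn (c + S.1, S.2) ≤ toSyn (c + T.1, T.2)
  /-- compatibility with the monomial order `m` -/
  compat : ∀ (a b : σ →₀ ℕ) (i : Fin n), toSyn (a, i) ≤ toSyn (b, i) ↔ a ≼[m] b

attribute [instance] ModOrder.lin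

/-- The set of module terms (module monomials with nonzero coefficient) of `α ∈ R^n`. -/
noncomputable def msupport (α : Fin n → MvPolynomial σ K) : Finset ((σ →₀ ℕ) × Fin n) := by
  classical
  exact Finset.univ.biUnion fun i => (α i).support.image fun a => (a, i)

/-- The signature of `α`: its maximal module term w.r.t. `mo` (`⊥` for `α = 0`). -/
noncomputable def sig {m : MonomialOrder σ} (mo : ModOrder σ n m)
    (α : Fin n → MvPolynomial σ K) : WithBot mo.syn :=
  ((msupport α).image mo.toSyn).max

/-- `T` is the signature of `α` (as a module monomial). -/
def IsSigMon {m : MonomialOrder σ} (mo : ModOrder σ n m)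
    (α : Fin n → MvPolynomial σ K) (T : (σ →₀ ℕ) × Fin n) : Prop :=
  sig mo α = (mo.toSyn T : WithBot mo.syn)

/-- One 𝔰-reduction step of `α` by some `β ∈ B`: a monomial multiple `b·β` whose polynomial
lead term equals (and cancels) a term of `π α` and with `s(b·β) ≤ s(α)` is subtracted. -/
def SRedStep (m : MonomialOrder σ) (mo : ModOrder σ n m) (F : Fin n → MvPolynomial σ K)
    (B : Set (Fin n → MvPolynomial σ K)) (α α' : Fin n → MvPolynomial σ K) : Prop :=
  ∃ β ∈ B, ∃ (a : σ →₀ ℕ) (c : K), c ≠ 0 ∧ piMap F β ≠ 0 ∧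
    (a + lm m (piMap F β)) ∈ (piMap F α).support ∧
    c * lc m (piMap F β) = (piMap F α).coeff (a + lm m (piMap F β)) ∧
    sig mo (mulV a c β) ≤ sig mo α ∧
    α' = fun i => α i - monomial a c * β i

/-- A regular 𝔰-reduction step: as `SRedStep`, but with `s(b·β) < s(α)`. -/
def RegSRedStep (m : MonomialOrder σ) (mo : ModOrder σ n m) (F : Fin n → MvPolynomial σ K)
    (B : Set (Fin n → MvPolynomial σ K)) (α α' : Fin n → MvPolynomial σ K) : Prop :=
  ∃ β ∈ B, ∃ (a : σ →₀ ℕ) (c : K), c ≠ 0 ∧ piMap F β ≠ 0 ∧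
    (a + lm m (piMap F β)) ∈ (piMap F α).support ∧
    c * lc m (piMap F β) = (piMap F α).coeff (a + lm m (piMap F β)) ∧
    sig mo (mulV a c β) < sig mo α ∧
    α' = fun i => α i - monomial a c * β i

/-- `α` 𝔰-reduces to zero w.r.t. `B`: a chain of 𝔰-reduction steps reaches a syzygy. -/
def SRedToZero (m : MonomialOrder σ) (mo : ModOrder σ n m) (F : Fin n → MvPolynomial σ K)
    (B : Set (Fin n → MvPolynomial σ K)) (α : Fin n → MvPolynomial σ K) : Prop :=
  ∃ γ, Relation.ReflTransGen (SRedStep m mo F B) α γ ∧ piMap F γ = 0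

/-- `α` regular 𝔰-reduces to zero w.r.t. `B`: a chain of regular 𝔰-reduction steps reaches
a syzygy. -/
def RegSRedToZero (m : MonomialOrder σ) (mo : ModOrder σ n m) (F : Fin n → MvPolynomial σ K)
    (B : Set (Fin n → MvPolynomial σ K)) (α : Fin n → MvPolynomial σ K) : Prop :=
  ∃ γ, Relation.ReflTransGen (RegSRedStep m mo F B) α γ ∧ piMap F γ = 0

/-- `B` is a signature Gröbner basis up to signature `T`: every `γ` with `s(γ) < T`
𝔰-reduces to zero w.r.t. `B`. -/
def SigGBUpTo (m : MonomialOrder σ) (mo : ModOrder σ n m) (F : Fin n → MvPolynomial σ K)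
    (B : Set (Fin n → MvPolynomial σ K)) (T : WithBot mo.syn) : Prop :=
  ∀ γ : Fin n → MvPolynomial σ K, sig mo γ < T → SRedToZero m mo F B γ


section Aux

open Finset

lemma mem_msupport {α : Fin n → MvPolynomial σ K} {t : σ →₀ ℕ} {i : Fin n} :
    (t, i) ∈ msupport α ↔ t ∈ (α i).support := by
  classical
  simp only [msupport, Finset.mem_biUnion, Finset.mem_univ, true_and, Finset.mem_image,
    Prod.mk.injEq]
  constructor
  · rintro ⟨j, a, ha, rfl, rfl⟩; exact ha
  · intro h; exact ⟨i, t, h, rfl, rfl⟩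

lemma support_monomial_mul_eq (a : σ →₀ ℕ) {c : K} (hc : c ≠ 0) (p : MvPolynomial σ K) :
    (monomial a c * p).support = p.support.map (addLeftEmbedding a) :=
  AddMonoidAlgebra.support_coeff_single_mul (G := σ →₀ ℕ) p c (fun y => by simp [hc]) a

lemma image_msupport_mulV {m : MonomialOrder σ} (mo : ModOrder σ n m) {a : σ →₀ ℕ} {c : K}
    (hc : c ≠ 0) (α : Fin n → MvPolynomial σ K) :
    (msupport (mulV a c α)).image mo.toSyn
      = (msupport α).image fun S => mo.toSyn (a + S.1, S.2) := by
  classical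
  ext y
  simp only [Finset.mem_image]
  constructor
  · rintro ⟨⟨t, i⟩, hti, rfl⟩
    rw [mem_msupport, mulV, support_monomial_mul_eq a hc, Finset.mem_map] at hti
    obtain ⟨s, hs, rfl⟩ := hti
    exact ⟨(s, i), mem_msupport.mpr hs, rfl⟩
  · rintro ⟨⟨s, j⟩, hS, rfl⟩
    refine ⟨(a + s, j), ?_, rfl⟩
    rw [mem_msupport, mulV, support_monomial_mul_eq a hc, Finset.mem_map]
    exact ⟨s, mem_msupport.mp hS, rfl⟩

lemma sig_mulV_lt (m : MonomialOrder σ) (mo : ModOrder σ n m) {a b : σ →₀ ℕ} {c d : K}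
    (hc : c ≠ 0) (hd : d ≠ 0) (hab : a ≺[m] b) {α : Fin n → MvPolynomial σ K}
    (hne : (msupport α).Nonempty) :
    sig mo (mulV a c α) < sig mo (mulV b d α) := by
  have key : ∀ (S : (σ →₀ ℕ) × Fin n), mo.toSyn (a + S.1, S.2) < mo.toSyn (b + S.1, S.2) := by
    intro S
    refine lt_of_le_of_ne ?_ ?_
    · exact (mo.compat _ _ S.2).mpr (by simpa [map_add] using add_le_add_right hab.le (m.toSyn S.1))
    · intro h
      apply hab.ne
      have h0 := mo.toSyn.injective h
      have h1 : a + S.1 = b + S.1 := congrArg Prod.fst h0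
      exact congrArg m.toSyn (add_right_cancel h1)
  rw [sig, sig, image_msupport_mulV mo hc, image_msupport_mulV mo hd]
  obtain ⟨S₀, hS₀, hmax⟩ := Finset.exists_max_image (msupport α)
    (fun S => mo.toSyn (a + S.1, S.2)) hne
  have h1 : ((msupport α).image fun S => mo.toSyn (a + S.1, S.2)).max
      ≤ (mo.toSyn (a + S₀.1, S₀.2) : WithBot mo.syn) := by
    apply Finset.max_le
    simp only [Finset.mem_image]
    rintro y ⟨S, hS, rfl⟩
    exact_mod_cast hmax S hS
  have h2 : (mo.toSyn (b + S₀.1, S₀.2) : WithBot mo.syn)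
      ≤ ((msupport α).image fun S => mo.toSyn (b + S.1, S.2)).max :=
    Finset.le_max (Finset.mem_image_of_mem _ hS₀)
  exact lt_of_le_of_lt h1 (lt_of_lt_of_le (by exact_mod_cast key S₀) h2)

lemma lm_mem_support (m : MonomialOrder σ) {p : MvPolynomial σ K} (hp : p ≠ 0) :
    lm m p ∈ p.support := by
  obtain ⟨b, hb, hsup⟩ := Finset.exists_mem_eq_sup p.support
    (MvPolynomial.support_nonempty.mpr hp) m.toSyn
  rw [lm, hsup, AddEquiv.symm_apply_apply]
  exact hb

lemma lc_ne_zero (m : MonomialOrder σ) {p : MvPolynomial σ K} (hp : p ≠ 0) : lc m p ≠ 0 :=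
  MvPolynomial.mem_support_iff.mp (lm_mem_support m hp)

lemma le_lm (m : MonomialOrder σ) {p : MvPolynomial σ K} {u : σ →₀ ℕ} (hu : u ∈ p.support) :
    u ≼[m] lm m p := by
  rw [lm, AddEquiv.apply_symm_apply]
  exact Finset.le_sup hu

lemma coeff_ne_zero_and_lt_lm_of_mem_sub_lt (m : MonomialOrder σ) {p : MvPolynomial σ K}
    (hp : p ≠ 0) {u : σ →₀ ℕ} (hu : u ∈ (p - lt m p).support) :
    p.coeff u ≠ 0 ∧ (u ≺[m] lm m p) := by
  classical
  have hne : u ≠ lm m p := by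
    rintro rfl
    rw [MvPolynomial.mem_support_iff, MvPolynomial.coeff_sub, lt, lc,
      MvPolynomial.coeff_monomial, if_pos rfl, sub_self] at hu
    exact hu rfl
  have hcoeff : (p - lt m p).coeff u = p.coeff u := by
    rw [MvPolynomial.coeff_sub, lt, MvPolynomial.coeff_monomial, if_neg (Ne.symm hne), sub_zero]
  have hu' : p.coeff u ≠ 0 := by
    rw [← hcoeff]; exact MvPolynomial.mem_support_iff.mp hu
  refine ⟨hu', lt_of_le_of_ne (le_lm m (MvPolynomial.mem_support_iff.mpr hu')) ?_⟩
  exact fun h => hne (m.toSyn.injective h)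

lemma msupport_nonempty {F α : Fin n → MvPolynomial σ K} (h : piMap F α ≠ 0) :
    (msupport α).Nonempty := by
  classical
  by_contra hcon
  apply h
  rw [Finset.not_nonempty_iff_eq_empty] at hcon
  have hz : ∀ i, α i = 0 := by
    intro i
    by_contra hi
    obtain ⟨t, ht⟩ := MvPolynomial.support_nonempty.mpr hi
    have : (t, i) ∈ msupport α := mem_msupport.mpr ht
    simp [hcon] at this
  simp [piMap, hz]

end Aux

/-- **Key inequality behind the signature product criterion.** If `π α` and `π β` have coprime
leading monomials and `T = max(s(lt(πβ)·α), s(lt(πα)·β))` is the signature of the S-pair, then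
multiplying `α` by any non-lead term `u` of `π β` gives signature `s(u·α) < T`, and
symmetrically for non-lead terms `v` of `π α`. -/
theorem sig_product_key_inequality (m : MonomialOrder σ) (mo : ModOrder σ n m)
    (F α β : Fin n → MvPolynomial σ K)
    (hα : piMap F α ≠ 0) (hβ : piMap F β ≠ 0)
    (hcop : mlcm (lm m (piMap F α)) (lm m (piMap F β))
      = lm m (piMap F α) + lm m (piMap F β)) :
    (∀ u ∈ (piMap F β - lt m (piMap F β)).support,
      sig mo (mulV u ((piMap F β).coeff u) α) <
        max (sig mo (mulV (lm m (piMap F β)) (lc m (piMap F β)) α))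
            (sig mo (mulV (lm m (piMap F α)) (lc m (piMap F α)) β))) ∧
    (∀ v ∈ (piMap F α - lt m (piMap F α)).support,
      sig mo (mulV v ((piMap F α).coeff v) β) <
        max (sig mo (mulV (lm m (piMap F β)) (lc m (piMap F β)) α))
            (sig mo (mulV (lm m (piMap F α)) (lc m (piMap F α)) β))) := by
  constructor
  · intro u hu
    obtain ⟨hcu, hlt⟩ := coeff_ne_zero_and_lt_lm_of_mem_sub_lt m hβ hu
    exact lt_of_lt_of_le
      (sig_mulV_lt m mo hcu (lc_ne_zero m hβ) hlt (msupport_nonempty hα))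
      (le_max_left _ _)
  · intro v hv
    obtain ⟨hcv, hlt⟩ := coeff_ne_zero_and_lt_lm_of_mem_sub_lt m hα hv
    exact lt_of_lt_of_le
      (sig_mulV_lt m mo hcv (lc_ne_zero m hα) hlt (msupport_nonempty hβ))
      (le_max_right _ _)

end GB
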